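/- For f : ℝ → ℝ bounded continuous, and E_f(z) = (i/π) ∫ [1/(z − t) + t/(t² + 1)] f(t) dt on the upper half-plane, the k-th complex derivative for k ≥ 1 equals E_f⁽ᵏ⁾(z) = (−1)ᵏ (i k!/π) ∫_{-∞}^{∞} f(t)/(z − t)^{k+1} dt. -/

import Mathlib

open MeasureTheory Complex

lemma sub_ofReal_ne (z : ℂ) (hz : 0 < z.im) (t : ℝ) : z - (t : ℂ) ≠ 0 := by
  intro h
  have h2 : (z - (t:ℂ)).im = 0 := by rw [h]; simp
  simp [Complex.sub_im] at h2
  linarith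

lemma im_le_norm_sub (z : ℂ) (t : ℝ) : z.im ≤ ‖z - (t:ℂ)‖ := by
  have h := Complex.abs_im_le_norm (z - t)
  rw [Complex.sub_im, Complex.ofReal_im, sub_zero] at h
  exact (le_abs_self _).trans h

lemma integrable_shift (a b : ℝ) (hb : b ≠ 0) :
    Integrable (fun t : ℝ => ((t - a) ^ 2 + b ^ 2)⁻¹) := by
  have h1 : Integrable (fun t : ℝ => (1 + (t / b) ^ 2)⁻¹) :=
    integrable_inv_one_add_sq.comp_div hb
  have h2 := (h1.comp_sub_right a).const_mul ((b ^ 2)⁻¹)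
  refine h2.congr ?_
  filter_upwards with t
  have hb2 : (b:ℝ) ^ 2 ≠ 0 := pow_ne_zero _ hb
  field_simp
  ring

lemma integrable_inv_pow_norm (z : ℂ) (hz : 0 < z.im) (n : ℕ) (hn : 2 ≤ n) :
    Integrable (fun t : ℝ => (‖z - (t:ℂ)‖ ^ n)⁻¹) := by
  have hmeas : AEStronglyMeasurable (fun t : ℝ => (‖z - (t:ℂ)‖ ^ n)⁻¹) volume := by
    apply Continuous.aestronglyMeasurable
    have h0 : ∀ t : ℝ, ‖z - (t:ℂ)‖ ^ n ≠ 0 := fun t =>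
      pow_ne_zero _ (norm_ne_zero_iff.2 (sub_ofReal_ne z hz t))
    exact ((continuous_const.sub Complex.continuous_ofReal).norm.pow n).inv₀ h0
  have hbase := (integrable_shift z.re z.im (ne_of_gt hz)).const_mul ((z.im ^ (n - 2))⁻¹)
  refine hbase.mono' hmeas ?_
  filter_upwards with t
  have him : z.im ≤ ‖z - (t:ℂ)‖ := im_le_norm_sub z t
  have hpos : 0 < ‖z - (t:ℂ)‖ := lt_of_lt_of_le hz him
  have hsq : ‖z - (t:ℂ)‖ ^ 2 = (t - z.re) ^ 2 + z.im ^ 2 := by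
    rw [Complex.sq_norm, Complex.normSq_apply, Complex.sub_re,
      Complex.sub_im, Complex.ofReal_re, Complex.ofReal_im]
    ring
  have key : z.im ^ (n - 2) * ((t - z.re) ^ 2 + z.im ^ 2) ≤ ‖z - (t:ℂ)‖ ^ n := by
    calc z.im ^ (n - 2) * ((t - z.re) ^ 2 + z.im ^ 2)
        ≤ ‖z - (t:ℂ)‖ ^ (n - 2) * ((t - z.re) ^ 2 + z.im ^ 2) := by
          apply mul_le_mul_of_nonneg_right (pow_le_pow_left₀ hz.le him _)
          positivity
      _ = ‖z - (t:ℂ)‖ ^ (n - 2) * ‖z - (t:ℂ)‖ ^ 2 := by rw [hsq]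
      _ = ‖z - (t:ℂ)‖ ^ n := by rw [← pow_add]; congr 1; omega
  rw [Real.norm_eq_abs, _root_.abs_of_nonneg (by positivity), ← mul_inv]
  exact inv_anti₀ (by positivity) key

lemma integrable_K (f : ℝ → ℝ) (C : ℝ) (hbC : ∀ t, |f t| ≤ C) (hc : Continuous f)
    (n : ℕ) (hn : 2 ≤ n) (z : ℂ) (hz : 0 < z.im) :
    Integrable (fun t : ℝ => (f t : ℂ) / (z - t) ^ n) := by
  have hmeas : AEStronglyMeasurable (fun t : ℝ => (f t : ℂ) / (z - t) ^ n) volume := by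
    apply Continuous.aestronglyMeasurable
    exact (Complex.continuous_ofReal.comp hc).div
      ((continuous_const.sub Complex.continuous_ofReal).pow n)
      (fun t => pow_ne_zero _ (sub_ofReal_ne z hz t))
  refine ((integrable_inv_pow_norm z hz n hn).const_mul C).mono' hmeas ?_
  filter_upwards with t
  rw [norm_div, norm_pow, Complex.norm_real, Real.norm_eq_abs, div_eq_mul_inv]
  have h1 : 0 < ‖z - (t:ℂ)‖ := lt_of_lt_of_le hz (im_le_norm_sub z t)
  exact mul_le_mul_of_nonneg_right (hbC t) (by positivity)

lemma hasDerivAt_K (f : ℝ → ℝ) (C : ℝ) (hbC : ∀ t, |f t| ≤ C) (hc : Continuous f)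
    (n : ℕ) (hn : 2 ≤ n) (z : ℂ) (hz : 0 < z.im) :
    HasDerivAt (fun w : ℂ => ∫ t : ℝ, (f t : ℂ) / (w - t) ^ n)
      ((-(n : ℂ)) * ∫ t : ℝ, (f t : ℂ) / (z - t) ^ (n + 1)) z := by
  set ε := z.im / 2 with hε_def
  have hε : 0 < ε := by positivity
  have hball : ∀ x ∈ Metric.ball z ε, ε < x.im := by
    intro x hx
    have h1 : |x.im - z.im| ≤ ‖x - z‖ := by
      have := Complex.abs_im_le_norm (x - z)
      rw [Complex.sub_im] at this
      exact this
    have h2 : ‖x - z‖ < ε := by rwa [← dist_eq_norm, ← Metric.mem_ball]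
    have h3 := abs_sub_lt_iff.1 (lt_of_le_of_lt h1 h2)
    linarith [h3.2]
  have hhalf : ∀ x ∈ Metric.ball z ε, ∀ t : ℝ, ‖z - (t:ℂ)‖ / 2 ≤ ‖x - (t:ℂ)‖ := by
    intro x hx t
    have h1 : ‖z - (t:ℂ)‖ ≤ ‖z - x‖ + ‖x - (t:ℂ)‖ := by
      have : z - (t:ℂ) = (z - x) + (x - t) := by ring
      rw [this]; exact norm_add_le _ _
    have h2 : ‖z - x‖ < ε := by rwa [← dist_eq_norm, ← Metric.mem_ball, Metric.mem_ball_comm]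
    have h3 : ε ≤ ‖x - (t:ℂ)‖ := (hball x hx).le.trans (im_le_norm_sub x t)
    linarith
  have key := hasDerivAt_integral_of_dominated_loc_of_deriv_le (μ := volume)
    (F := fun (w : ℂ) (t : ℝ) => (f t : ℂ) / (w - t) ^ n)
    (F' := fun (w : ℂ) (t : ℝ) => (-(n : ℂ)) * ((f t : ℂ) / (w - t) ^ (n + 1)))
    (x₀ := z) (bound := fun t : ℝ => ((n : ℝ) * C * 2 ^ (n + 1)) * (‖z - (t:ℂ)‖ ^ (n + 1))⁻¹)
    (s := Metric.ball z ε) (Metric.ball_mem_nhds z hε) ?_ ?_ ?_ ?_ ?_ ?_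
  · have h2 : (∫ t : ℝ, (-(n : ℂ)) * ((f t : ℂ) / (z - t) ^ (n + 1)))
        = (-(n : ℂ)) * ∫ t : ℝ, (f t : ℂ) / (z - t) ^ (n + 1) := integral_const_mul _ _
    rw [h2] at key
    exact key.2
  · filter_upwards [Metric.ball_mem_nhds z hε] with x hx
    apply Continuous.aestronglyMeasurable
    have hxim : 0 < x.im := hε.trans (hball x hx)
    exact (Complex.continuous_ofReal.comp hc).div
      ((continuous_const.sub Complex.continuous_ofReal).pow n)
      (fun t => pow_ne_zero _ (sub_ofReal_ne x hxim t))
  · exact integrable_K f C hbC hc n hn z hz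
  · apply Continuous.aestronglyMeasurable
    exact continuous_const.mul ((Complex.continuous_ofReal.comp hc).div
      ((continuous_const.sub Complex.continuous_ofReal).pow (n+1))
      (fun t => pow_ne_zero _ (sub_ofReal_ne z hz t)))
  · filter_upwards with t x hx
    have hzt : 0 < ‖z - (t:ℂ)‖ := lt_of_lt_of_le hz (im_le_norm_sub z t)
    have hxt : 0 < ‖x - (t:ℂ)‖ := lt_of_lt_of_le (hε.trans (hball x hx)) (im_le_norm_sub x t)
    have hC : 0 ≤ C := le_trans (abs_nonneg _) (hbC 0)
    rw [norm_mul, norm_div, norm_pow, Complex.norm_real, Real.norm_eq_abs]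
    have hnn : ‖(-(n:ℂ))‖ = (n : ℝ) := by
      rw [norm_neg]; simp
    rw [hnn]
    have hp : (‖z - (t:ℂ)‖ / 2) ^ (n+1) ≤ ‖x - (t:ℂ)‖ ^ (n+1) :=
      pow_le_pow_left₀ (by positivity) (hhalf x hx t) _
    rw [div_pow] at hp
    calc (n : ℝ) * (|f t| / ‖x - (t:ℂ)‖ ^ (n+1))
        ≤ (n : ℝ) * (C / (‖z - (t:ℂ)‖ ^ (n+1) / 2 ^ (n+1))) := by
          apply mul_le_mul_of_nonneg_left _ (Nat.cast_nonneg n)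
          exact div_le_div₀ (by positivity) (hbC t) (by positivity) hp
      _ = ((n : ℝ) * C * 2 ^ (n + 1)) * (‖z - (t:ℂ)‖ ^ (n + 1))⁻¹ := by
          field_simp
  · exact (integrable_inv_pow_norm z hz (n+1) (by omega)).const_mul _
  · filter_upwards with t x hx
    have hxim : 0 < x.im := hε.trans (hball x hx)
    have hxt : x - (t:ℂ) ≠ 0 := sub_ofReal_ne x hxim t
    have h1 : HasDerivAt (fun w : ℂ => (w - (t:ℂ)) ^ n)
        ((n : ℂ) * (x - t) ^ (n - 1) * 1) x := ((hasDerivAt_id x).sub_const _).pow n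
    have h2 := (h1.inv (pow_ne_zero _ hxt)).const_mul ((f t : ℂ))
    have h3 : (f t : ℂ) * (-((n : ℂ) * (x - t) ^ (n - 1) * 1) / ((x - t) ^ n) ^ 2)
        = (-(n : ℂ)) * ((f t : ℂ) / (x - t) ^ (n + 1)) := by
      obtain ⟨m, rfl⟩ : ∃ m, n = m + 2 := ⟨n - 2, by omega⟩
      rw [show m + 2 - 1 = m + 1 by omega]
      field_simp
      ring
    rw [h3] at h2
    simpa [div_eq_mul_inv] using h2

lemma t2ne (t : ℝ) : ((t:ℂ)^2 + 1) ≠ 0 := by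
  have h : ((t:ℂ)^2 + 1) = ((t^2 + 1 : ℝ) : ℂ) := by push_cast; ring
  rw [h]
  exact_mod_cast ne_of_gt (by positivity : (0:ℝ) < t^2 + 1)

lemma integrable_E (f : ℝ → ℝ) (C : ℝ) (hbC : ∀ t, |f t| ≤ C) (hc : Continuous f)
    (z : ℂ) (hz : 0 < z.im) :
    Integrable (fun t : ℝ => (1 / (z - t) + t / (t ^ 2 + 1)) * (f t : ℂ)) := by
  have hC : 0 ≤ C := le_trans (abs_nonneg _) (hbC 0)
  have hmeas : AEStronglyMeasurable
      (fun t : ℝ => (1 / (z - t) + t / (t ^ 2 + 1)) * (f t : ℂ)) volume := by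
    apply Continuous.aestronglyMeasurable
    refine Continuous.mul (Continuous.add ?_ ?_) (Complex.continuous_ofReal.comp hc)
    · exact continuous_const.div (continuous_const.sub Complex.continuous_ofReal)
        (fun t => sub_ofReal_ne z hz t)
    · exact Complex.continuous_ofReal.div
        ((Complex.continuous_ofReal.pow 2).add continuous_const) (fun t => t2ne t)
  set D : ℝ := C * ((1 + ‖z‖ ^ 2) * (z.im)⁻¹ + ‖z‖) with hD
  refine (integrable_inv_one_add_sq.const_mul D).mono' hmeas ?_
  filter_upwards with t
  have hzt : z - (t:ℂ) ≠ 0 := sub_ofReal_ne z hz t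
  have him : z.im ≤ ‖z - (t:ℂ)‖ := im_le_norm_sub z t
  have hr : 0 < ‖z - (t:ℂ)‖ := lt_of_lt_of_le hz him
  have heq : (1 / (z - t) + (t:ℂ) / ((t:ℂ) ^ 2 + 1))
      = (1 + (t:ℂ) * z) / ((z - t) * ((t:ℂ) ^ 2 + 1)) := by
    rw [div_add_div _ _ hzt (t2ne t)]
    congr 1
    ring
  have hT : ‖((t:ℂ)^2 + 1)‖ = t^2 + 1 := by
    have h : ((t:ℂ)^2 + 1) = ((t^2 + 1 : ℝ) : ℂ) := by push_cast; ring
    rw [h, Complex.norm_real, Real.norm_eq_abs, abs_of_pos (by positivity)]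
  have habs_t : |t| ≤ ‖z - (t:ℂ)‖ + ‖z‖ := by
    have h1 : ‖(t:ℂ)‖ ≤ ‖(t:ℂ) - z‖ + ‖z‖ := by
      simpa using norm_add_le ((t:ℂ) - z) z
    rw [norm_sub_rev] at h1
    simpa [Complex.norm_real, Real.norm_eq_abs] using h1
  have hN : ‖1 + (t:ℂ) * z‖ ≤ 1 + ‖z‖ ^ 2 + ‖z‖ * ‖z - (t:ℂ)‖ := by
    have h1 : ‖1 + (t:ℂ) * z‖ ≤ 1 + |t| * ‖z‖ := by
      calc ‖1 + (t:ℂ) * z‖ ≤ ‖(1:ℂ)‖ + ‖(t:ℂ) * z‖ := norm_add_le _ _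
        _ = 1 + |t| * ‖z‖ := by
            rw [norm_one, norm_mul, Complex.norm_real, Real.norm_eq_abs]
    have h2 : 0 ≤ ‖z‖ := norm_nonneg z
    nlinarith [habs_t]
  rw [heq, norm_mul, norm_div, norm_mul, hT, Complex.norm_real, Real.norm_eq_abs]
  have hgoal1 : ‖1 + (t:ℂ) * z‖ / (‖z - (t:ℂ)‖ * (t ^ 2 + 1)) * |f t|
      ≤ (1 + ‖z‖ ^ 2 + ‖z‖ * ‖z - (t:ℂ)‖) / (‖z - (t:ℂ)‖ * (t ^ 2 + 1)) * C :=
    mul_le_mul (by gcongr) (hbC t) (abs_nonneg _) (by positivity)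
  refine hgoal1.trans ?_
  rw [hD, div_mul_eq_mul_div, div_le_iff₀ (by positivity : (0:ℝ) < ‖z - (t:ℂ)‖ * (t^2+1))]
  have e1 : C * ((1 + ‖z‖^2) * z.im⁻¹ + ‖z‖) * (1 + t^2)⁻¹ * (‖z - (t:ℂ)‖ * (t^2+1))
      = C * ((1 + ‖z‖^2) * z.im⁻¹ + ‖z‖) * ‖z - (t:ℂ)‖ := by
    have : (1:ℝ) + t^2 ≠ 0 := by positivity
    field_simp
    ring
  rw [e1]
  have h3 : 1 ≤ z.im⁻¹ * ‖z - (t:ℂ)‖ := by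
    rw [inv_mul_eq_div, le_div_iff₀ hz]
    linarith
  nlinarith [mul_le_mul_of_nonneg_left h3 (by positivity : (0:ℝ) ≤ C * (1 + ‖z‖^2)),
    norm_nonneg z, hr, hC]

lemma hasDerivAt_E0 (f : ℝ → ℝ) (C : ℝ) (hbC : ∀ t, |f t| ≤ C) (hc : Continuous f)
    (z : ℂ) (hz : 0 < z.im) :
    HasDerivAt (fun w : ℂ => ∫ t : ℝ, (1 / (w - t) + t / (t ^ 2 + 1)) * (f t : ℂ))
      (-∫ t : ℝ, (f t : ℂ) / (z - t) ^ 2) z := by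
  set ε := z.im / 2 with hε_def
  have hε : 0 < ε := by positivity
  have hball : ∀ x ∈ Metric.ball z ε, ε < x.im := by
    intro x hx
    have h1 : |x.im - z.im| ≤ ‖x - z‖ := by
      have := Complex.abs_im_le_norm (x - z)
      rw [Complex.sub_im] at this
      exact this
    have h2 : ‖x - z‖ < ε := by rwa [← dist_eq_norm, ← Metric.mem_ball]
    have h3 := abs_sub_lt_iff.1 (lt_of_le_of_lt h1 h2)
    linarith [h3.2]
  have hhalf : ∀ x ∈ Metric.ball z ε, ∀ t : ℝ, ‖z - (t:ℂ)‖ / 2 ≤ ‖x - (t:ℂ)‖ := by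
    intro x hx t
    have h1 : ‖z - (t:ℂ)‖ ≤ ‖z - x‖ + ‖x - (t:ℂ)‖ := by
      have he : z - (t:ℂ) = (z - x) + (x - t) := by ring
      rw [he]; exact norm_add_le _ _
    have h2 : ‖z - x‖ < ε := by rwa [← dist_eq_norm, ← Metric.mem_ball, Metric.mem_ball_comm]
    have h3 : ε ≤ ‖x - (t:ℂ)‖ := (hball x hx).le.trans (im_le_norm_sub x t)
    linarith
  have hC : 0 ≤ C := le_trans (abs_nonneg _) (hbC 0)
  have key := hasDerivAt_integral_of_dominated_loc_of_deriv_le (μ := volume)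
    (F := fun (w : ℂ) (t : ℝ) => (1 / (w - t) + t / (t ^ 2 + 1)) * (f t : ℂ))
    (F' := fun (w : ℂ) (t : ℝ) => -((f t : ℂ) / (w - t) ^ 2))
    (x₀ := z) (bound := fun t : ℝ => (C * 2 ^ 2) * (‖z - (t:ℂ)‖ ^ 2)⁻¹)
    (s := Metric.ball z ε) (Metric.ball_mem_nhds z hε) ?_ ?_ ?_ ?_ ?_ ?_
  · have h2 : (∫ t : ℝ, -((f t : ℂ) / (z - t) ^ 2))
        = -∫ t : ℝ, (f t : ℂ) / (z - t) ^ 2 := integral_neg _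
    rw [h2] at key
    exact key.2
  · filter_upwards [Metric.ball_mem_nhds z hε] with x hx
    apply Continuous.aestronglyMeasurable
    have hxim : 0 < x.im := hε.trans (hball x hx)
    refine Continuous.mul (Continuous.add ?_ ?_) (Complex.continuous_ofReal.comp hc)
    · exact continuous_const.div (continuous_const.sub Complex.continuous_ofReal)
        (fun t => sub_ofReal_ne x hxim t)
    · exact Complex.continuous_ofReal.div
        ((Complex.continuous_ofReal.pow 2).add continuous_const) (fun t => t2ne t)
  · exact integrable_E f C hbC hc z hz
  · apply Continuous.aestronglyMeasurable
    exact ((Complex.continuous_ofReal.comp hc).div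
      ((continuous_const.sub Complex.continuous_ofReal).pow 2)
      (fun t => pow_ne_zero _ (sub_ofReal_ne z hz t))).neg
  · filter_upwards with t x hx
    have hzt : 0 < ‖z - (t:ℂ)‖ := lt_of_lt_of_le hz (im_le_norm_sub z t)
    have hxt : 0 < ‖x - (t:ℂ)‖ := lt_of_lt_of_le (hε.trans (hball x hx)) (im_le_norm_sub x t)
    rw [norm_neg, norm_div, norm_pow, Complex.norm_real, Real.norm_eq_abs]
    have hp : (‖z - (t:ℂ)‖ / 2) ^ 2 ≤ ‖x - (t:ℂ)‖ ^ 2 :=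
      pow_le_pow_left₀ (by positivity) (hhalf x hx t) _
    rw [div_pow] at hp
    calc |f t| / ‖x - (t:ℂ)‖ ^ 2
        ≤ C / (‖z - (t:ℂ)‖ ^ 2 / 2 ^ 2) := div_le_div₀ hC (hbC t) (by positivity) hp
      _ = (C * 2 ^ 2) * (‖z - (t:ℂ)‖ ^ 2)⁻¹ := by field_simp
  · exact (integrable_inv_pow_norm z hz 2 le_rfl).const_mul _
  · filter_upwards with t x hx
    have hxim : 0 < x.im := hε.trans (hball x hx)
    have hxt : x - (t:ℂ) ≠ 0 := sub_ofReal_ne x hxim t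
    have h1 : HasDerivAt (fun w : ℂ => (w - (t:ℂ))⁻¹) (-1 / (x - t) ^ 2) x :=
      ((hasDerivAt_id x).sub_const _).inv hxt
    have h2 := (h1.add_const ((t:ℂ) / ((t:ℂ) ^ 2 + 1))).mul_const ((f t : ℂ))
    have h3 : (-1 / (x - (t:ℂ)) ^ 2) * (f t : ℂ) = -((f t : ℂ) / (x - t) ^ 2) := by ring
    rw [h3] at h2
    simpa [one_div] using h2

theorem E_iterated_deriv (f : ℝ → ℝ)
    (hb : ∃ C : ℝ, ∀ t : ℝ, |f t| ≤ C) (hc : Continuous f)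
    (E : ℂ → ℂ)
    (hE : ∀ z : ℂ, E z = (Complex.I / Real.pi) *
      ∫ t : ℝ, (1 / (z - t) + t / (t ^ 2 + 1)) * f t)
    (k : ℕ) (hk : 1 ≤ k) (z : ℂ) (hz : 0 < z.im) :
    iteratedDeriv k E z =
      (-1 : ℂ) ^ k * (Complex.I * (k.factorial : ℂ) / Real.pi) *
        ∫ t : ℝ, (f t : ℂ) / (z - t) ^ (k + 1) := by
  obtain ⟨C, hbC⟩ := hb
  have hEfun : E = fun w : ℂ => (Complex.I / Real.pi) *
      ∫ t : ℝ, (1 / (w - t) + t / (t ^ 2 + 1)) * f t := funext hE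
  have key : ∀ k : ℕ, 1 ≤ k → ∀ z : ℂ, 0 < z.im →
      iteratedDeriv k E z =
        (-1 : ℂ) ^ k * (Complex.I * (k.factorial : ℂ) / Real.pi) *
          ∫ t : ℝ, (f t : ℂ) / (z - t) ^ (k + 1) := by
    intro k hk
    induction k, hk using Nat.le_induction with
    | base =>
      intro z hz
      rw [iteratedDeriv_one]
      have hD := (hasDerivAt_E0 f C hbC hc z hz).const_mul
        ((Complex.I : ℂ) / (Real.pi : ℂ))
      rw [← hEfun] at hD
      rw [hD.deriv]
      simp [Nat.factorial]
    | succ k hk ih =>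
      intro z hz
      rw [iteratedDeriv_succ]
      have hopen : IsOpen {w : ℂ | 0 < w.im} := isOpen_lt continuous_const Complex.continuous_im
      have hev : iteratedDeriv k E =ᶠ[nhds z] (fun w =>
          (-1 : ℂ) ^ k * (Complex.I * (k.factorial : ℂ) / Real.pi) *
            ∫ t : ℝ, (f t : ℂ) / (w - t) ^ (k + 1)) := by
        filter_upwards [hopen.mem_nhds hz] with w hw using ih w hw
      rw [hev.deriv_eq]
      have hK := (hasDerivAt_K f C hbC hc (k + 1) (by omega) z hz).const_mul
        ((-1 : ℂ) ^ k * (Complex.I * (k.factorial : ℂ) / Real.pi))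
      rw [hK.deriv]
      rw [Nat.factorial_succ]
      push_cast
      ring
  exact key k hk z hz
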